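/- For any set P of n points in convex position in the plane (n ≥ 4), the set ℝ² \ P can be covered by ⌊(n+5)/2⌋ convex sets. -/

import Mathlib

namespace Stmt5
open Set

noncomputable section


abbrev V : Type := ℝ × ℝ

def cross (a b x : V) : ℝ := (b.1 - a.1) * (x.2 - a.2) - (b.2 - a.2) * (x.1 - a.1)

def XC (t : ℝ) (p : V) : ℝ := p.1 + t * p.2

lemma cross_self_left (a b : V) : cross a b a = 0 := by unfold cross; ring
lemma cross_self_right (a b : V) : cross a b b = 0 := by unfold cross; ring
lemma cross_swap (a b x : V) : cross b a x = - cross a b x := by unfold cross; ring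
lemma cross_rot (a b x : V) : cross a x b = - cross a b x := by unfold cross; ring
lemma cross_perm1 (a b c : V) : cross c b a = - cross a b c := by unfold cross; ring

lemma cross_combo (a b x y : V) (p q : ℝ) (hpq : p + q = 1) :
    cross a b (p • x + q • y) = p * cross a b x + q * cross a b y := by
  simp only [cross, Prod.fst_add, Prod.snd_add, Prod.smul_fst, Prod.smul_snd, smul_eq_mul]
  linear_combination ((b.1 - a.1) * a.2 - (b.2 - a.2) * a.1) * hpq

lemma XC_combo (t : ℝ) (x y : V) (p q : ℝ) (hpq : p + q = 1) :
    XC t (p • x + q • y) = p * XC t x + q * XC t y := by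
  simp only [XC, Prod.fst_add, Prod.snd_add, Prod.smul_fst, Prod.smul_snd, smul_eq_mul]
  linear_combination 0 * hpq

lemma cross_vert (t : ℝ) (a b x y : V) (hxy : XC t x = XC t y) :
    cross a b x - cross a b y = (x.2 - y.2) * (XC t b - XC t a) := by
  simp only [cross, XC] at *
  linear_combination (-(b.2 - a.2)) * hxy

/-- Same XC coordinate, second coordinate strictly between: open segment membership. -/
lemma mem_openSegment_vert (t : ℝ) (x y z : V) (h1 : XC t x = XC t z) (h2 : XC t y = XC t z)
    (hb1 : x.2 < z.2) (hb2 : z.2 < y.2) : z ∈ openSegment ℝ x y := by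
  have hyx : x.2 < y.2 := lt_trans hb1 hb2
  set γ : ℝ := (z.2 - x.2) / (y.2 - x.2) with hγ
  have hden : 0 < y.2 - x.2 := by linarith
  have hγ0 : 0 < γ := div_pos (by linarith) hden
  have hγ1 : γ < 1 := (div_lt_one hden).2 (by linarith)
  refine ⟨1 - γ, γ, by linarith, hγ0, by ring, ?_⟩
  have h2nd : (1 - γ) * x.2 + γ * y.2 = z.2 := by
    have hk : γ * (y.2 - x.2) = z.2 - x.2 := by
      rw [hγ]; exact div_mul_cancel₀ _ (ne_of_gt hden)
    linear_combination hk
  have hx1 : x.1 = z.1 + t * z.2 - t * x.2 := by simp only [XC] at h1; linarith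
  have hy1 : y.1 = z.1 + t * z.2 - t * y.2 := by simp only [XC] at h2; linarith
  have h1st : (1 - γ) * x.1 + γ * y.1 = z.1 := by
    rw [hx1, hy1]; linear_combination (-t) * h2nd
  ext <;> simp only [Prod.fst_add, Prod.snd_add, Prod.smul_fst, Prod.smul_snd, smul_eq_mul]
  · exact h1st
  · exact h2nd

/-- On the line through `a, b`, being strictly XC-between means open segment membership. -/
lemma mem_openSegment_of_cross (t : ℝ) (a b x : V) (h0 : cross a b x = 0)
    (h1 : XC t a < XC t x) (h2 : XC t x < XC t b) : x ∈ openSegment ℝ a b := by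
  have hab : 0 < XC t b - XC t a := by linarith
  set s : ℝ := (XC t x - XC t a) / (XC t b - XC t a) with hs
  have hs0 : 0 < s := div_pos (by linarith) hab
  have hs1 : s < 1 := (div_lt_one hab).2 (by linarith)
  have hkey : s * (XC t b - XC t a) = XC t x - XC t a := by
    rw [hs]; exact div_mul_cancel₀ _ (ne_of_gt hab)
  simp only [XC] at hkey
  set w1 : ℝ := x.1 - a.1 - s * (b.1 - a.1) with hw1
  set w2 : ℝ := x.2 - a.2 - s * (b.2 - a.2) with hw2
  have e1 : w1 + t * w2 = 0 := by simp only [hw1, hw2]; linarith [hkey]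
  have e2 : (b.1 - a.1) * w2 - (b.2 - a.2) * w1 = 0 := by
    simp only [hw1, hw2, cross] at *
    linear_combination h0
  have e3 : (b.1 - a.1) + t * (b.2 - a.2) ≠ 0 := by
    intro h; simp only [XC] at hab; nlinarith
  have hw2z : w2 = 0 := by
    have : ((b.1 - a.1) + t * (b.2 - a.2)) * w2 = 0 := by linear_combination e2 + (b.2-a.2) * e1
    exact (mul_eq_zero.mp this).resolve_left e3
  have hw1z : w1 = 0 := by rw [hw2z] at e1; linarith
  refine ⟨1 - s, s, by linarith, hs0, by ring, ?_⟩
  simp only [hw1, hw2] at hw1z hw2z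
  ext <;> simp only [Prod.fst_add, Prod.snd_add, Prod.smul_fst, Prod.smul_snd, smul_eq_mul]
  · linarith
  · linarith

lemma cross_of_openSegment (a b x : V) (h : x ∈ openSegment ℝ a b) : cross a b x = 0 := by
  obtain ⟨p, q, hp, hq, hpq, rfl⟩ := h
  rw [cross_combo a b a b p q hpq, cross_self_left, cross_self_right]; ring

lemma XC_between_of_openSegment (t : ℝ) (a b x : V) (hab : XC t a < XC t b)
    (h : x ∈ openSegment ℝ a b) : XC t a < XC t x ∧ XC t x < XC t b := by
  obtain ⟨p, q, hp, hq, hpq, rfl⟩ := h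
  rw [XC_combo t a b p q hpq]
  have h1 := mul_lt_mul_of_pos_left hab hq
  have h2 := mul_lt_mul_of_pos_left hab hp
  have e1 : p * XC t a + q * XC t a = XC t a := by linear_combination XC t a * hpq
  have e2 : p * XC t b + q * XC t b = XC t b := by linear_combination XC t b * hpq
  constructor <;> linarith


def ConvPos (P : Finset V) : Prop :=
  ∀ p ∈ P, ∀ y ∈ convexHull ℝ (P : Set V), ∀ z ∈ convexHull ℝ (P : Set V),
    p ∈ openSegment ℝ y z → y = p ∧ z = p

lemma convPos_of_extreme (P : Finset V)
    (h : (P : Set V) ⊆ (convexHull ℝ (P : Set V)).extremePoints ℝ) : ConvPos P := by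
  intro p hp y hy z hz hmem
  have := (mem_extremePoints.mp (h hp)).2 y hy z hz hmem
  exact this

lemma no_three (t : ℝ) (P : Finset V) (hcp : ConvPos P) (hinj : Set.InjOn (XC t) P)
    {a b q : V} (ha : a ∈ P) (hb : b ∈ P) (hq : q ∈ P)
    (hab : a ≠ b) (haq : a ≠ q) (hbq : b ≠ q) : cross a b q ≠ 0 := by
  intro h0
  have hhull : (P : Set V) ⊆ convexHull ℝ (P : Set V) := subset_convexHull ℝ _
  have key : ∀ x y z : V, x ∈ P → y ∈ P → z ∈ P → cross x y z = 0 →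
      XC t x < XC t z → XC t z < XC t y → False := by
    intro x y z hx hy hz hc h1 h2
    have hm := mem_openSegment_of_cross t x y z hc h1 h2
    have := hcp z hz x (hhull hx) y (hhull hy) hm
    have hxz : x ≠ z := fun h => by rw [h] at h1; exact lt_irrefl _ h1
    exact hxz this.1
  have hXab : XC t a ≠ XC t b := fun h => hab (hinj ha hb h)
  have hXaq : XC t a ≠ XC t q := fun h => haq (hinj ha hq h)
  have hXbq : XC t b ≠ XC t q := fun h => hbq (hinj hb hq h)
  rcases lt_trichotomy (XC t a) (XC t b) with h1 | h1 | h1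
  · rcases lt_trichotomy (XC t q) (XC t a) with h2 | h2 | h2
    · -- q < a < b : a between q b
      refine key q b a hq hb ha ?_ h2 h1
      unfold cross at h0 ⊢; linear_combination -h0
    · exact hXaq h2.symm
    · rcases lt_trichotomy (XC t q) (XC t b) with h3 | h3 | h3
      · exact key a b q ha hb hq h0 h2 h3
      · exact hXbq h3.symm
      · -- a < b < q : b between a q
        refine key a q b ha hq hb ?_ h1 h3
        unfold cross at h0 ⊢; linear_combination -h0
  · exact hXab h1
  · rcases lt_trichotomy (XC t q) (XC t b) with h2 | h2 | h2
    · -- q < b < a : b between q a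
      refine key q a b hq ha hb ?_ h2 h1
      unfold cross at h0 ⊢; linear_combination h0
    · exact hXbq h2.symm
    · rcases lt_trichotomy (XC t q) (XC t a) with h3 | h3 | h3
      · -- b < q < a : q between b a
        refine key b a q hb ha hq ?_ h2 h3
        unfold cross at h0 ⊢; linear_combination -h0
      · exact hXaq h3.symm
      · -- b < a < q : a between b q
        refine key b q a hb hq ha ?_ h1 h3
        unfold cross at h0 ⊢; linear_combination h0

lemma mul_pos_factor {a b : ℝ} (h : 0 < a * b) (hb : 0 < b) : 0 < a := by
  by_contra hc; push_neg at hc; nlinarith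

lemma mul_neg_factor {a b : ℝ} (h : a * b < 0) (hb : 0 < b) : a < 0 := by
  by_contra hc; push_neg at hc; nlinarith

lemma chain_edge (t : ℝ) (P : Finset V) (hcp : ConvPos P) (hinj : Set.InjOn (XC t) P)
    (l r : V) (hl : l ∈ P) (hr : r ∈ P)
    (hlmin : ∀ p ∈ P, XC t l ≤ XC t p) (hrmax : ∀ p ∈ P, XC t p ≤ XC t r)
    (u v : V) (hu : u ∈ P) (hv : v ∈ P)
    (huU : 0 ≤ cross l r u) (hvU : 0 ≤ cross l r v)
    (huv : XC t u < XC t v)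
    (hcons : ∀ q ∈ P, 0 ≤ cross l r q → ¬(XC t u < XC t q ∧ XC t q < XC t v)) :
    ∀ q ∈ P, q ≠ u → q ≠ v → cross u v q < 0 := by
  intro q hq hqu hqv
  by_contra hc
  push_neg at hc
  have hhull : (P : Set V) ⊆ convexHull ℝ (P : Set V) := subset_convexHull ℝ _
  have hXqu : XC t q ≠ XC t u := fun h => hqu (hinj hq hu h)
  have hXqv : XC t q ≠ XC t v := fun h => hqv (hinj hq hv h)
  have hXlu : XC t l ≤ XC t u := hlmin u hu
  have hXvr : XC t v ≤ XC t r := hrmax v hv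
  have hXlr : XC t l < XC t r := by linarith
  have hlr : l ≠ r := fun h => by rw [h] at hXlr; exact lt_irrefl _ hXlr
  rcases eq_or_lt_of_le hc with h0 | hpos
  · -- collinear case
    rcases lt_trichotomy (XC t q) (XC t u) with hlt | heq | hgt
    · -- u between q and v
      have hz : cross q v u = 0 := by unfold cross at h0 ⊢; linear_combination h0
      have hm := mem_openSegment_of_cross t q v u hz hlt huv
      have := hcp u hu q (hhull hq) v (hhull hv) hm
      exact hqu this.1
    · exact hXqu heq
    · rcases lt_trichotomy (XC t q) (XC t v) with hlt2 | heq2 | hgt2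
      · -- q between u and v
        have hm := mem_openSegment_of_cross t u v q h0.symm hgt hlt2
        have := hcp q hq u (hhull hu) v (hhull hv) hm
        exact hqu this.1.symm
      · exact hXqv heq2
      · -- v between u and q
        have hz : cross u q v = 0 := by unfold cross at h0 ⊢; linear_combination h0
        have hm := mem_openSegment_of_cross t u q v hz huv hgt2
        have := hcp v hv u (hhull hu) q (hhull hq) hm
        exact hqv this.2
  · -- strictly above the line u v
    rcases lt_trichotomy (XC t q) (XC t u) with hlt | heq | hgt
    · -- B3 : q to the left of u ; u is not extreme
      have hXlq : XC t l ≤ XC t q := hlmin q hq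
      have hul : u ≠ l := fun h => by rw [h] at hlt; linarith
      have hur : u ≠ r := fun h => by rw [h] at huv; linarith
      have hcu : 0 < cross l r u :=
        lt_of_le_of_ne huU (Ne.symm (no_three t P hcp hinj hl hr hu hlr (Ne.symm hul) (Ne.symm hur)))
      -- z0 on segment [l, r] at height XC u
      set α : ℝ := (XC t u - XC t l) / (XC t r - XC t l) with hα
      have hα0 : 0 ≤ α := div_nonneg (by linarith) (by linarith)
      have hα1 : α ≤ 1 := by
        rw [div_le_one (by linarith)]
        linarith [hrmax u hu]
      set z0 : V := (1 - α) • l + α • r with hz0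
      have hz0hull : z0 ∈ convexHull ℝ (P : Set V) :=
        segment_subset_convexHull hl hr ⟨1 - α, α, by linarith, hα0, by ring, rfl⟩
      have hαkey : α * (XC t r - XC t l) = XC t u - XC t l := by
        rw [hα]; exact div_mul_cancel₀ _ (ne_of_gt (by linarith))
      have hz0X : XC t z0 = XC t u := by
        rw [hz0, XC_combo t l r (1 - α) α (by ring)]
        linear_combination hαkey
      have hz0c : cross l r z0 = 0 := by
        rw [hz0, cross_combo l r l r (1 - α) α (by ring), cross_self_left, cross_self_right]
        ring
      have hvert1 := cross_vert t l r u z0 (by rw [hz0X])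
      have hz0lt : z0.2 < u.2 := by
        have hprod : 0 < (u.2 - z0.2) * (XC t r - XC t l) := by linarith
        have := mul_pos_factor hprod (by linarith)
        linarith
      -- u' on segment [q, v] at height XC u
      set γ : ℝ := (XC t u - XC t q) / (XC t v - XC t q) with hγ
      have hγ0 : 0 ≤ γ := div_nonneg (by linarith) (by linarith)
      have hγ1 : γ ≤ 1 := by
        rw [div_le_one (by linarith)]; linarith
      set u' : V := (1 - γ) • q + γ • v with hu'
      have hu'hull : u' ∈ convexHull ℝ (P : Set V) :=
        segment_subset_convexHull hq hv ⟨1 - γ, γ, by linarith, hγ0, by ring, rfl⟩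
      have hγkey : γ * (XC t v - XC t q) = XC t u - XC t q := by
        rw [hγ]; exact div_mul_cancel₀ _ (ne_of_gt (by linarith))
      have hu'X : XC t u' = XC t u := by
        rw [hu', XC_combo t q v (1 - γ) γ (by ring)]
        linear_combination hγkey
      have hu'c : cross q v u' = 0 := by
        rw [hu', cross_combo q v q v (1 - γ) γ (by ring), cross_self_left, cross_self_right]
        ring
      have hqvu : cross q v u < 0 := by
        have h' : cross q v u = - cross u v q := by unfold cross; ring
        rw [h']; linarith
      have hvert2 := cross_vert t q v u u' (by rw [hu'X])
      have hulev : u.2 < u'.2 := by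
        have hprod : (u.2 - u'.2) * (XC t v - XC t q) < 0 := by linarith
        have := mul_neg_factor hprod (by linarith)
        linarith
      have hmem := mem_openSegment_vert t z0 u' u hz0X hu'X hz0lt hulev
      have := hcp u hu z0 hz0hull u' hu'hull hmem
      rw [this.1] at hz0lt
      exact lt_irrefl _ hz0lt
    · exact hXqu heq
    · rcases lt_trichotomy (XC t q) (XC t v) with hlt2 | heq2 | hgt2
      · -- B1 : q strictly between, below the line l r
        have hqlow : cross l r q < 0 := by
          by_contra h
          push_neg at h
          exact hcons q hq h ⟨hgt, hlt2⟩
        set s : ℝ := (XC t q - XC t u) / (XC t v - XC t u) with hs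
        have hs0 : 0 ≤ s := div_nonneg (by linarith) (by linarith)
        have hs1 : s ≤ 1 := by rw [div_le_one (by linarith)]; linarith
        set z : V := (1 - s) • u + s • v with hz
        have hskey : s * (XC t v - XC t u) = XC t q - XC t u := by
          rw [hs]; exact div_mul_cancel₀ _ (ne_of_gt (by linarith))
        have hzX : XC t z = XC t q := by
          rw [hz, XC_combo t u v (1 - s) s (by ring)]
          linear_combination hskey
        have hzuv : cross u v z = 0 := by
          rw [hz, cross_combo u v u v (1 - s) s (by ring), cross_self_left, cross_self_right]
          ring
        have hzlr : 0 ≤ cross l r z := by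
          rw [hz, cross_combo l r u v (1 - s) s (by ring)]
          have h1 := mul_nonneg (by linarith : (0:ℝ) ≤ 1 - s) huU
          have h2 := mul_nonneg hs0 hvU
          linarith
        have hd1 := cross_vert t l r q z (by rw [hzX])
        have hq2 : q.2 - z.2 < 0 := by
          have hprod : (q.2 - z.2) * (XC t r - XC t l) < 0 := by linarith
          exact mul_neg_factor hprod (by linarith)
        have hd2 := cross_vert t u v q z (by rw [hzX])
        have hprod2 : (q.2 - z.2) * (XC t v - XC t u) < 0 :=
          mul_neg_of_neg_of_pos hq2 (by linarith)
        linarith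
      · exact hXqv heq2
      · -- B2 : q to the right of v ; v is not extreme
        have hXqr : XC t q ≤ XC t r := hrmax q hq
        have hvr : v ≠ r := fun h => by rw [h] at hgt2; linarith
        have hvl : v ≠ l := fun h => by rw [h] at huv; linarith
        have hcv : 0 < cross l r v :=
          lt_of_le_of_ne hvU (Ne.symm (no_three t P hcp hinj hl hr hv hlr (Ne.symm hvl) (Ne.symm hvr)))
        set α : ℝ := (XC t v - XC t l) / (XC t r - XC t l) with hα
        have hα0 : 0 ≤ α := div_nonneg (by linarith) (by linarith)
        have hα1 : α ≤ 1 := by rw [div_le_one (by linarith)]; linarith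
        set z0 : V := (1 - α) • l + α • r with hz0
        have hz0hull : z0 ∈ convexHull ℝ (P : Set V) :=
          segment_subset_convexHull hl hr ⟨1 - α, α, by linarith, hα0, by ring, rfl⟩
        have hαkey : α * (XC t r - XC t l) = XC t v - XC t l := by
          rw [hα]; exact div_mul_cancel₀ _ (ne_of_gt (by linarith))
        have hz0X : XC t z0 = XC t v := by
          rw [hz0, XC_combo t l r (1 - α) α (by ring)]
          linear_combination hαkey
        have hz0c : cross l r z0 = 0 := by
          rw [hz0, cross_combo l r l r (1 - α) α (by ring), cross_self_left, cross_self_right]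
          ring
        have hvert1 := cross_vert t l r v z0 (by rw [hz0X])
        have hz0lt : z0.2 < v.2 := by
          have hprod : 0 < (v.2 - z0.2) * (XC t r - XC t l) := by linarith
          have := mul_pos_factor hprod (by linarith)
          linarith
        set β : ℝ := (XC t v - XC t u) / (XC t q - XC t u) with hβ
        have hβ0 : 0 ≤ β := div_nonneg (by linarith) (by linarith)
        have hβ1 : β ≤ 1 := by rw [div_le_one (by linarith)]; linarith
        set v' : V := (1 - β) • u + β • q with hv'
        have hv'hull : v' ∈ convexHull ℝ (P : Set V) :=
          segment_subset_convexHull hu hq ⟨1 - β, β, by linarith, hβ0, by ring, rfl⟩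
        have hβkey : β * (XC t q - XC t u) = XC t v - XC t u := by
          rw [hβ]; exact div_mul_cancel₀ _ (ne_of_gt (by linarith))
        have hv'X : XC t v' = XC t v := by
          rw [hv', XC_combo t u q (1 - β) β (by ring)]
          linear_combination hβkey
        have hv'c : cross u q v' = 0 := by
          rw [hv', cross_combo u q u q (1 - β) β (by ring), cross_self_left, cross_self_right]
          ring
        have huqv : cross u q v < 0 := by
          have h' : cross u q v = - cross u v q := by unfold cross; ring
          rw [h']; linarith
        have hvert2 := cross_vert t u q v v' (by rw [hv'X])
        have hvlev : v.2 < v'.2 := by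
          have hprod : (v.2 - v'.2) * (XC t q - XC t u) < 0 := by linarith
          have := mul_neg_factor hprod (by linarith)
          linarith
        have hmem := mem_openSegment_vert t z0 v' v hz0X hv'X hz0lt hvlev
        have := hcp v hv z0 hz0hull v' hv'hull hmem
        rw [this.1] at hz0lt
        exact lt_irrefl _ hz0lt

def OEdge (P : Finset V) (x y : V) : Prop :=
  x ∈ P ∧ y ∈ P ∧ x ≠ y ∧ ∃ s : ℝ, s ≠ 0 ∧ ∀ q ∈ P, q ≠ x → q ≠ y → s * cross x y q < 0

lemma OEdge.symm {P : Finset V} {x y : V} (h : OEdge P x y) : OEdge P y x := by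
  obtain ⟨hx, hy, hne, s, hs, hall⟩ := h
  refine ⟨hy, hx, hne.symm, -s, neg_ne_zero.2 hs, fun q hq h1 h2 => ?_⟩
  have h3 := hall q hq h2 h1
  have hcr : cross y x q = - cross x y q := by unfold cross; ring
  rw [hcr]
  linarith [h3]

lemma exists_inj (P : Finset V) : ∃ t : ℝ, Set.InjOn (XC t) P := by
  classical
  set T : Finset ℝ := (P ×ˢ P).image (fun pq => (pq.2.1 - pq.1.1) / (pq.1.2 - pq.2.2)) with hT
  obtain ⟨t, ht⟩ := Finset.exists_notMem T
  refine ⟨t, ?_⟩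
  intro p hp q hq hXeq
  by_contra hne
  simp only [XC] at hXeq
  have h2 : p.2 ≠ q.2 := by
    intro h
    apply hne
    have h1 : p.1 = q.1 := by rw [h] at hXeq; linarith
    exact Prod.ext h1 h
  have ht' : t = (q.1 - p.1) / (p.2 - q.2) := by
    rw [eq_div_iff (sub_ne_zero.2 h2)]
    linarith
  apply ht
  rw [hT, ht']
  exact Finset.mem_image.2 ⟨(p, q), Finset.mem_product.2 ⟨hp, hq⟩, rfl⟩

lemma exists_sorted_enum (t : ℝ) (S : Finset V) (hinj : Set.InjOn (XC t) S) :
    ∃ u : Fin S.card → V, (∀ i, u i ∈ S) ∧ (∀ p ∈ S, ∃ i, u i = p) ∧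
      StrictMono (fun i => XC t (u i)) := by
  classical
  have hcard : (S.image (XC t)).card = S.card := Finset.card_image_of_injOn hinj
  set φ := (S.image (XC t)).orderIsoOfFin hcard with hφ
  have hmem : ∀ i : Fin S.card, ((φ i : ℝ)) ∈ S.image (XC t) := fun i => (φ i).2
  choose u hu hXu using fun i => Finset.mem_image.mp (hmem i)
  refine ⟨u, fun i => hu i, ?_, ?_⟩
  · intro p hp
    have hmem2 : XC t p ∈ S.image (XC t) := Finset.mem_image_of_mem _ hp
    obtain ⟨i, hi⟩ := φ.surjective ⟨XC t p, hmem2⟩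
    refine ⟨i, hinj (hu i) hp ?_⟩
    rw [hXu i, hi]
  · intro i j hij
    have h1 := φ.strictMono hij
    have h2 : (φ i : ℝ) < (φ j : ℝ) := h1
    simpa only [hXu i, hXu j] using h2

def rho (t : ℝ) : V →ₗ[ℝ] V where
  toFun p := (p.1 + 2*t*p.2, -p.2)
  map_add' x y := by ext <;> simp <;> ring
  map_smul' c x := by ext <;> simp <;> ring

lemma rho_invol (t : ℝ) (p : V) : rho t (rho t p) = p := by
  ext <;> simp [rho] <;> ring

lemma rho_inj (t : ℝ) : Function.Injective (rho t) := by
  intro a b h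
  have h2 := congrArg (rho t) h
  rwa [rho_invol, rho_invol] at h2

lemma XC_rho (t : ℝ) (p : V) : XC t (rho t p) = XC t p := by
  simp [XC, rho]; ring

lemma cross_rho (t : ℝ) (a b x : V) : cross (rho t a) (rho t b) (rho t x) = - cross a b x := by
  simp [cross, rho]; ring

lemma convPos_reflect (t : ℝ) (P : Finset V) (hcp : ConvPos P) :
    ConvPos (P.image (rho t)) := by
  classical
  intro ptil hptil y hy z hz hmem
  obtain ⟨p, hp, rfl⟩ := Finset.mem_image.mp hptil
  have himg : ((P.image (rho t) : Finset V) : Set V) = rho t '' (P : Set V) := by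
    simp [Finset.coe_image]
  rw [himg] at hy hz
  have hsub : convexHull ℝ (rho t '' (P : Set V)) ⊆ rho t '' convexHull ℝ (P : Set V) :=
    convexHull_min (Set.image_mono (subset_convexHull ℝ _))
      ((convex_convexHull ℝ _).linear_image (rho t))
  obtain ⟨y2, hy2, rfl⟩ := hsub hy
  obtain ⟨z2, hz2, rfl⟩ := hsub hz
  obtain ⟨a, b, ha, hb, hab, heq⟩ := hmem
  have heq2 : rho t (a • y2 + b • z2) = rho t p := by
    rw [map_add, map_smul, map_smul]; exact heq
  have hps : p ∈ openSegment ℝ y2 z2 := ⟨a, b, ha, hb, hab, rho_inj t heq2⟩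
  have hthis := hcp p hp y2 hy2 z2 hz2 hps
  exact ⟨by rw [hthis.1], by rw [hthis.2]⟩

def pairUp : List V → List (V × V)
  | (a :: b :: []) => [(a, b)]
  | (a :: b :: c :: []) => [(a, b), (b, c)]
  | (a :: b :: c :: d :: l) => (a, b) :: pairUp (c :: d :: l)
  | _ => []

lemma pairUp_chain {R : V → V → Prop} :
    ∀ l : List V, l.Chain' R → ∀ pr ∈ pairUp l, R pr.1 pr.2 := by
  intro l
  induction l using pairUp.induct with
  | case1 a b =>
    intro hch pr hpr
    simp only [pairUp, List.mem_singleton] at hpr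
    subst hpr
    exact (List.isChain_cons_cons.mp hch).1
  | case2 a b c =>
    intro hch pr hpr
    have h1 := (List.isChain_cons_cons.mp hch).1
    have h2 := (List.isChain_cons_cons.mp (List.isChain_cons_cons.mp hch).2).1
    simp only [pairUp, List.mem_cons, List.mem_singleton, List.not_mem_nil, or_false] at hpr
    rcases hpr with rfl | rfl
    · exact h1
    · exact h2
  | case3 a b c d l ih =>
    intro hch pr hpr
    simp only [pairUp, List.mem_cons] at hpr
    rcases hpr with rfl | hpr
    · exact (List.isChain_cons_cons.mp hch).1
    · exact ih ((List.isChain_cons_cons.mp hch).2.tail) pr hpr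
  | case4 l h1 h2 h3 =>
    intro hch pr hpr
    have hemp : pairUp l = [] := by
      cases l with
      | nil => rfl
      | cons a lx => cases lx with
        | nil => rfl
        | cons b ly =>
          cases ly with
          | nil => exact absurd rfl (fun h => h1 a b h)
          | cons c lz =>
            cases lz with
            | nil => exact absurd rfl (fun h => h2 a b c h)
            | cons d l4 => exact absurd rfl (fun h => h3 a b c d l4 h)
    rw [hemp] at hpr
    exact absurd hpr List.not_mem_nil

lemma pairUp_cover :
    ∀ l : List V, 2 ≤ l.length → ∀ p ∈ l, ∃ pr ∈ pairUp l, p = pr.1 ∨ p = pr.2 := by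
  intro l
  induction l using pairUp.induct with
  | case1 a b =>
    intro _ p hp
    simp only [List.mem_cons, List.not_mem_nil, or_false] at hp
    exact ⟨(a, b), by simp [pairUp], hp⟩
  | case2 a b c =>
    intro _ p hp
    simp only [List.mem_cons, List.not_mem_nil, or_false] at hp
    rcases hp with h | h | h
    · exact ⟨(a, b), by simp [pairUp], Or.inl h⟩
    · exact ⟨(a, b), by simp [pairUp], Or.inr h⟩
    · exact ⟨(b, c), by simp [pairUp], Or.inr h⟩
  | case3 a b c d l ih =>
    intro _ p hp
    simp only [List.mem_cons] at hp
    rcases hp with h | h | hp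
    · exact ⟨(a, b), by simp [pairUp], Or.inl h⟩
    · exact ⟨(a, b), by simp [pairUp], Or.inr h⟩
    · obtain ⟨pr, hpr, hor⟩ := ih (by simp) p (by simpa using hp)
      refine ⟨pr, ?_, hor⟩
      simp only [pairUp, List.mem_cons]
      right
      exact hpr
  | case4 l h1 h2 h3 =>
    intro hlen p hp
    exfalso
    cases l with
    | nil => simp at hlen
    | cons a lx => cases lx with
      | nil => simp at hlen
      | cons b ly =>
        cases ly with
        | nil => exact h1 a b rfl
        | cons c lz =>
          cases lz with
          | nil => exact h2 a b c rfl
          | cons d l4 => exact h3 a b c d l4 rfl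

lemma pairUp_len : ∀ l : List V, 2 * (pairUp l).length ≤ l.length + 1 := by
  intro l
  induction l using pairUp.induct with
  | case1 a b => simp [pairUp]
  | case2 a b c => simp [pairUp]
  | case3 a b c d l ih => simp only [pairUp, List.length_cons] at *; omega
  | case4 l h1 h2 h3 =>
    have hemp : pairUp l = [] := by
      cases l with
      | nil => rfl
      | cons a lx => cases lx with
        | nil => rfl
        | cons b ly =>
          cases ly with
          | nil => exact absurd rfl (fun h => h1 a b h)
          | cons c lz =>
            cases lz with
            | nil => exact absurd rfl (fun h => h2 a b c h)
            | cons d l4 => exact absurd rfl (fun h => h3 a b c d l4 h)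
    simp [hemp]


lemma chain'_ofFn {n : ℕ} (f : Fin n → V) (R : V → V → Prop)
    (h : ∀ (i : ℕ) (h1 : i < n) (h2 : i + 1 < n), R (f ⟨i, h1⟩) (f ⟨i + 1, h2⟩)) :
    (List.ofFn f).Chain' R := by
  show List.IsChain R (List.ofFn f)
  rw [List.isChain_iff_getElem]
  intro i hi
  rw [List.getElem_ofFn, List.getElem_ofFn]
  simp only [List.length_ofFn] at hi
  exact h i (by omega) (by omega)

lemma head?_eq_none_iff_aux {n : ℕ} (hn : n = 0) {f : Fin n → V} :
    (List.ofFn f).head? = none := by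
  subst hn
  rfl

lemma getLast?_ofFn {n : ℕ} (hn : 0 < n) (f : Fin n → V) :
    (List.ofFn f).getLast? = some (f ⟨n - 1, by omega⟩) := by
  rw [List.getLast?_eq_getElem?, List.getElem?_eq_getElem (by simp; omega)]
  simp [List.getElem_ofFn]

lemma head?_ofFn {n : ℕ} (hn : 0 < n) (f : Fin n → V) :
    (List.ofFn f).head? = some (f ⟨0, hn⟩) := by
  rw [List.head?_eq_getElem?, List.getElem?_eq_getElem (by simp; omega)]
  simp [List.getElem_ofFn]

lemma exists_pairs (t : ℝ) (P : Finset V) (hcp : ConvPos P) (hinj : Set.InjOn (XC t) P)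
    (hn : 2 ≤ P.card) :
    ∃ prs : List (V × V),
      (∀ pr ∈ prs, OEdge P pr.1 pr.2 ∧ XC t pr.1 < XC t pr.2) ∧
      (∀ p ∈ P, ∃ pr ∈ prs, p = pr.1 ∨ p = pr.2) ∧
      2 * prs.length ≤ P.card + 1 := by
  classical
  have hne : P.Nonempty := Finset.card_pos.mp (by omega)
  obtain ⟨l, hl, hlmin⟩ := P.exists_min_image (XC t) hne
  obtain ⟨r, hr, hrmax⟩ := P.exists_max_image (XC t) hne
  obtain ⟨p1, hp1, p2, hp2, hp12⟩ := Finset.one_lt_card.mp (by omega : 1 < P.card)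
  have hXlr : XC t l < XC t r := by
    rcases lt_or_ge (XC t l) (XC t r) with h | h
    · exact h
    · exfalso
      apply hp12
      exact hinj hp1 hp2 (by linarith [hlmin p1 hp1, hrmax p1 hp1, hlmin p2 hp2, hrmax p2 hp2])
  have hlr : l ≠ r := fun h => by rw [h] at hXlr; exact lt_irrefl _ hXlr
  set U := P.filter (fun p => 0 ≤ cross l r p) with hU
  set D := P.filter (fun p => cross l r p ≤ 0) with hD
  have hlU : l ∈ U := Finset.mem_filter.2 ⟨hl, by simp [cross_self_left]⟩
  have hrU : r ∈ U := Finset.mem_filter.2 ⟨hr, by simp [cross_self_right]⟩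
  have hlD : l ∈ D := Finset.mem_filter.2 ⟨hl, by simp [cross_self_left]⟩
  have hrD : r ∈ D := Finset.mem_filter.2 ⟨hr, by simp [cross_self_right]⟩
  have hinjU : Set.InjOn (XC t) ↑U := hinj.mono (Finset.coe_subset.2 (Finset.filter_subset _ _))
  have hinjD : Set.InjOn (XC t) ↑D := hinj.mono (Finset.coe_subset.2 (Finset.filter_subset _ _))
  obtain ⟨uF, huFmem, huFsurj, huFmono⟩ := exists_sorted_enum t U hinjU
  obtain ⟨dF, hdFmem, hdFsurj, hdFmono⟩ := exists_sorted_enum t D hinjD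
  have hk2le : 2 ≤ U.card := Finset.one_lt_card.mpr ⟨l, hlU, r, hrU, hlr⟩
  have hk22le : 2 ≤ D.card := Finset.one_lt_card.mpr ⟨l, hlD, r, hrD, hlr⟩
  -- upper chain edges
  have hUedge : ∀ (i j : Fin U.card), (i : ℕ) + 1 = (j : ℕ) → OEdge P (uF i) (uF j) := by
    intro i j hij
    have hmemi := Finset.mem_filter.1 (huFmem i)
    have hmemj := Finset.mem_filter.1 (huFmem j)
    have hlt : XC t (uF i) < XC t (uF j) := huFmono (by rw [Fin.lt_def]; omega)
    have hcons : ∀ q ∈ P, 0 ≤ cross l r q → ¬(XC t (uF i) < XC t q ∧ XC t q < XC t (uF j)) := by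
      rintro q hq hq0 ⟨ha, hb⟩
      have hqU : q ∈ U := Finset.mem_filter.2 ⟨hq, hq0⟩
      obtain ⟨j', hj'⟩ := huFsurj q hqU
      rw [← hj'] at ha hb
      have h1 : i < j' := huFmono.lt_iff_lt.1 ha
      have h2 : j' < j := huFmono.lt_iff_lt.1 hb
      rw [Fin.lt_def] at h1 h2
      omega
    have hedge := chain_edge t P hcp hinj l r hl hr hlmin hrmax (uF i) (uF j)
      hmemi.1 hmemj.1 hmemi.2 hmemj.2 hlt hcons
    exact ⟨hmemi.1, hmemj.1, fun h => by rw [h] at hlt; exact lt_irrefl _ hlt,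
      1, one_ne_zero, fun q hq h1 h2 => by rw [one_mul]; exact hedge q hq h1 h2⟩
  -- reflected data for the lower chain
  set Q := P.image (rho t) with hQdef
  have hcpQ := convPos_reflect t P hcp
  have hinjQ : Set.InjOn (XC t) ↑Q := by
    intro x hx y hy hxy
    rw [hQdef, Finset.coe_image] at hx hy
    obtain ⟨p, hp, rfl⟩ := hx
    obtain ⟨q, hq, rfl⟩ := hy
    rw [XC_rho, XC_rho] at hxy
    rw [hinj hp hq hxy]
  have hlQ : rho t l ∈ Q := Finset.mem_image_of_mem _ hl
  have hrQ : rho t r ∈ Q := Finset.mem_image_of_mem _ hr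
  have hlminQ : ∀ p ∈ Q, XC t (rho t l) ≤ XC t p := by
    intro p hp
    obtain ⟨q, hq, rfl⟩ := Finset.mem_image.1 hp
    rw [XC_rho, XC_rho]
    exact hlmin q hq
  have hrmaxQ : ∀ p ∈ Q, XC t p ≤ XC t (rho t r) := by
    intro p hp
    obtain ⟨q, hq, rfl⟩ := Finset.mem_image.1 hp
    rw [XC_rho, XC_rho]
    exact hrmax q hq
  have hDedge : ∀ (i j : Fin D.card), (i : ℕ) + 1 = (j : ℕ) → OEdge P (dF i) (dF j) := by
    intro i j hij
    have hmemi := Finset.mem_filter.1 (hdFmem i)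
    have hmemj := Finset.mem_filter.1 (hdFmem j)
    have hlt : XC t (dF i) < XC t (dF j) := hdFmono (by rw [Fin.lt_def]; omega)
    have hcons : ∀ q ∈ Q, 0 ≤ cross (rho t l) (rho t r) q →
        ¬(XC t (rho t (dF i)) < XC t q ∧ XC t q < XC t (rho t (dF j))) := by
      rintro qt hqt h0 ⟨ha, hb⟩
      obtain ⟨q, hq, rfl⟩ := Finset.mem_image.1 hqt
      rw [cross_rho] at h0
      rw [XC_rho, XC_rho] at ha
      rw [XC_rho, XC_rho] at hb
      have hqD : q ∈ D := Finset.mem_filter.2 ⟨hq, by linarith⟩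
      obtain ⟨j', hj'⟩ := hdFsurj q hqD
      rw [← hj'] at ha hb
      have h1 : i < j' := hdFmono.lt_iff_lt.1 ha
      have h2 : j' < j := hdFmono.lt_iff_lt.1 hb
      rw [Fin.lt_def] at h1 h2
      omega
    have hedge := chain_edge t Q hcpQ hinjQ (rho t l) (rho t r) hlQ hrQ hlminQ hrmaxQ
      (rho t (dF i)) (rho t (dF j))
      (Finset.mem_image_of_mem _ hmemi.1) (Finset.mem_image_of_mem _ hmemj.1)
      (by rw [cross_rho]; linarith [hmemi.2]) (by rw [cross_rho]; linarith [hmemj.2])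
      (by rw [XC_rho, XC_rho]; exact hlt) hcons
    refine ⟨hmemi.1, hmemj.1, fun h => by rw [h] at hlt; exact lt_irrefl _ hlt,
      -1, by norm_num, fun q hq h1 h2 => ?_⟩
    have hres := hedge (rho t q) (Finset.mem_image_of_mem _ hq)
      (fun h => h1 (rho_inj t h)) (fun h => h2 (rho_inj t h))
    rw [cross_rho] at hres
    linarith
  -- endpoints of the chains
  have huFP : ∀ i, uF i ∈ P := fun i => (Finset.mem_filter.1 (huFmem i)).1
  have hdFP : ∀ i, dF i ∈ P := fun i => (Finset.mem_filter.1 (hdFmem i)).1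
  have hUlast : uF ⟨U.card - 1, by omega⟩ = r := by
    obtain ⟨i, hi⟩ := huFsurj r hrU
    have hle : XC t (uF i) ≤ XC t (uF ⟨U.card - 1, by omega⟩) :=
      huFmono.monotone (by rw [Fin.le_def]; simp; omega)
    rw [hi] at hle
    exact hinj (huFP _) hr (le_antisymm (hrmax _ (huFP _)) hle)
  have hD0 : dF ⟨0, by omega⟩ = l := by
    obtain ⟨i, hi⟩ := hdFsurj l hlD
    have hle : XC t (dF ⟨0, by omega⟩) ≤ XC t (dF i) :=
      hdFmono.monotone (by rw [Fin.le_def]; simp)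
    rw [hi] at hle
    exact hinj (hdFP _) hl (le_antisymm hle (hlmin _ (hdFP _)))
  have hDlast : dF ⟨D.card - 1, by omega⟩ = r := by
    obtain ⟨i, hi⟩ := hdFsurj r hrD
    have hle : XC t (dF i) ≤ XC t (dF ⟨D.card - 1, by omega⟩) :=
      hdFmono.monotone (by rw [Fin.le_def]; simp; omega)
    rw [hi] at hle
    exact hinj (hdFP _) hr (le_antisymm (hrmax _ (hdFP _)) hle)
  -- counting
  have hUDcard : U.card + D.card = P.card + 2 := by
    have hunion : U ∪ D = P := by
      ext p
      simp only [Finset.mem_union, hU, hD, Finset.mem_filter]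
      constructor
      · rintro (⟨h, _⟩ | ⟨h, _⟩) <;> exact h
      · intro hp
        rcases le_total 0 (cross l r p) with h | h
        · exact Or.inl ⟨hp, h⟩
        · exact Or.inr ⟨hp, h⟩
    have hinter : U ∩ D = {l, r} := by
      ext p
      simp only [Finset.mem_inter, Finset.mem_insert, Finset.mem_singleton, hU, hD,
        Finset.mem_filter]
      constructor
      · rintro ⟨⟨hp, h1⟩, ⟨-, h2⟩⟩
        by_contra hcon
        push_neg at hcon
        exact no_three t P hcp hinj hl hr hp hlr (Ne.symm hcon.1) (Ne.symm hcon.2)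
          (le_antisymm h2 h1)
      · rintro (rfl | rfl)
        · exact ⟨⟨hl, by simp [cross_self_left]⟩, hl, by simp [cross_self_left]⟩
        · exact ⟨⟨hr, by simp [cross_self_right]⟩, hr, by simp [cross_self_right]⟩
    have hcui := Finset.card_union_add_card_inter U D
    rw [hunion, hinter] at hcui
    have hpair : ({l, r} : Finset V).card = 2 := Finset.card_pair hlr
    rw [hpair] at hcui
    omega
  -- the cyclic list
  set mid := List.ofFn (fun i : Fin (D.card - 2) => dF ⟨D.card - 2 - (i : ℕ), by omega⟩) with hmid
  set cyc := List.ofFn uF ++ mid with hcyc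
  have hcycchain : cyc.Chain' (fun x y => OEdge P x y) := by
    rw [hcyc]
    show List.IsChain _ (List.ofFn uF ++ mid)
    rw [List.isChain_append]
    refine ⟨?_, ?_, ?_⟩
    · exact chain'_ofFn uF _ (fun i h1 h2 => hUedge ⟨i, h1⟩ ⟨i + 1, h2⟩ rfl)
    · rw [hmid]
      exact chain'_ofFn _ _ (fun i h1 h2 =>
        OEdge.symm (hDedge ⟨D.card - 2 - (i + 1), by omega⟩ ⟨D.card - 2 - i, by omega⟩
          (by show D.card - 2 - (i + 1) + 1 = D.card - 2 - i; omega)))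
    · intro x hx y hy
      by_cases hmid0 : D.card - 2 = 0
      · rw [hmid] at hy
        rw [head?_eq_none_iff_aux hmid0] at hy
        exact absurd hy (Option.not_mem_none y)
      · rw [getLast?_ofFn (by omega) uF] at hx
        rw [hmid, head?_ofFn (by omega)] at hy
        have hx2 : x = uF ⟨U.card - 1, by omega⟩ := (Option.some_inj.1 hx).symm
        have hy2 : y = dF ⟨D.card - 2 - 0, by omega⟩ := (Option.some_inj.1 hy).symm
        have hy3 : y = dF ⟨D.card - 2, by omega⟩ := by
          rw [hy2]; congr 1
        rw [hx2, hUlast, hy3]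
        have hj := hDedge ⟨D.card - 2, by omega⟩ ⟨D.card - 1, by omega⟩
          (show D.card - 2 + 1 = D.card - 1 by omega)
        rw [hDlast] at hj
        exact hj.symm
  have hcyclen : cyc.length = P.card := by
    rw [hcyc, List.length_append, List.length_ofFn, hmid, List.length_ofFn]
    omega
  have hcyccover : ∀ p ∈ P, p ∈ cyc := by
    intro p hp
    rcases le_or_gt 0 (cross l r p) with h | h
    · have hpU : p ∈ U := Finset.mem_filter.2 ⟨hp, h⟩
      obtain ⟨i, hi⟩ := huFsurj p hpU
      exact List.mem_append_left _ (List.mem_ofFn.2 ⟨i, hi⟩)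
    · have hpD : p ∈ D := Finset.mem_filter.2 ⟨hp, le_of_lt h⟩
      obtain ⟨j, hj⟩ := hdFsurj p hpD
      have hj0 : (j : ℕ) ≠ 0 := by
        intro h0
        have heq : p = l := by
          rw [← hj, show j = (⟨0, by omega⟩ : Fin D.card) from Fin.ext h0, hD0]
        rw [heq, cross_self_left] at h
        exact lt_irrefl _ h
      have hjlast : (j : ℕ) ≠ D.card - 1 := by
        intro h0
        have heq : p = r := by
          rw [← hj, show j = (⟨D.card - 1, by omega⟩ : Fin D.card) from Fin.ext h0, hDlast]
        rw [heq, cross_self_right] at h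
        exact lt_irrefl _ h
      have hjb : (j : ℕ) < D.card := j.2
      have hrw : dF ⟨D.card - 2 - (D.card - 2 - (j : ℕ)), by omega⟩ = p := by
        rw [← hj]
        congr 1
        exact Fin.ext (by show D.card - 2 - (D.card - 2 - (j : ℕ)) = (j : ℕ); omega)
      exact List.mem_append_right _ (List.mem_ofFn.2 ⟨⟨D.card - 2 - (j : ℕ), by omega⟩, hrw⟩)
  set prs0 := pairUp cyc with hprs0
  set prs := prs0.map (fun pr => if XC t pr.1 < XC t pr.2 then pr else (pr.2, pr.1)) with hprs
  refine ⟨prs, ?_, ?_, ?_⟩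
  · intro pr hpr
    obtain ⟨pr0, hpr0, rfl⟩ := List.mem_map.1 hpr
    have hedge := pairUp_chain cyc hcycchain pr0 hpr0
    by_cases hxy : XC t pr0.1 < XC t pr0.2
    · rw [if_pos hxy]
      exact ⟨hedge, hxy⟩
    · rw [if_neg hxy]
      push_neg at hxy
      have hne2 : XC t pr0.2 ≠ XC t pr0.1 := fun h =>
        hedge.2.2.1 (hinj hedge.1 hedge.2.1 h.symm)
      exact ⟨hedge.symm, lt_of_le_of_ne hxy hne2⟩
  · intro p hp
    obtain ⟨pr0, hpr0, hor⟩ := pairUp_cover cyc (by rw [hcyclen]; omega) p (hcyccover p hp)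
    refine ⟨if XC t pr0.1 < XC t pr0.2 then pr0 else (pr0.2, pr0.1),
      List.mem_map_of_mem hpr0, ?_⟩
    by_cases hxy : XC t pr0.1 < XC t pr0.2
    · rw [if_pos hxy]; exact hor
    · rw [if_neg hxy]
      rcases hor with h | h
      · exact Or.inr h
      · exact Or.inl h
  · rw [hprs, List.length_map]
    have hlen := pairUp_len cyc
    rw [hcyclen] at hlen
    exact hlen


set_option maxHeartbeats 2000000 in
lemma cover_of_pairs (t : ℝ) (P : Finset V) (hinj : Set.InjOn (XC t) P)
    (prs : List (V × V))
    (hedge : ∀ pr ∈ prs, OEdge P pr.1 pr.2 ∧ XC t pr.1 < XC t pr.2)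
    (hcover : ∀ p ∈ P, ∃ pr ∈ prs, p = pr.1 ∨ p = pr.2)
    (N : ℕ) (hN : prs.length + 2 ≤ N) :
    ∃ K : Fin N → Set V, (∀ i, Convex ℝ (K i)) ∧ (⋃ i, K i) = ((P : Set V))ᶜ := by
  classical
  have hex : ∀ pr : V × V, ∃ s : ℝ, pr ∈ prs →
      (s ≠ 0 ∧ ∀ q ∈ P, q ≠ pr.1 → q ≠ pr.2 → s * cross pr.1 pr.2 q < 0) := by
    intro pr
    by_cases h : pr ∈ prs
    · obtain ⟨s, hs⟩ := (hedge pr h).1.2.2.2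
      exact ⟨s, fun _ => hs⟩
    · exact ⟨1, fun h2 => absurd h2 h⟩
  choose sg hsg' using hex
  have hsg : ∀ pr ∈ prs, sg pr ≠ 0 ∧
      ∀ q ∈ P, q ≠ pr.1 → q ≠ pr.2 → sg pr * cross pr.1 pr.2 q < 0 := fun pr hpr => hsg' pr hpr
  set f : (V × V) → V → ℝ := fun pr x => sg pr * cross pr.1 pr.2 x with hfdef
  -- f is zero at the two endpoints of a pair, and negative at all other points of P
  have hfP : ∀ pr ∈ prs, ∀ p ∈ P, f pr p ≤ 0 := by
    intro pr hpr p hp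
    by_cases h1 : p = pr.1
    · rw [hfdef]; simp only []; rw [h1, cross_self_left, mul_zero]
    · by_cases h2 : p = pr.2
      · rw [hfdef]; simp only []; rw [h2, cross_self_right, mul_zero]
      · exact le_of_lt ((hsg pr hpr).2 p hp h1 h2)
  -- x on the line of pr with the same XC as an endpoint must be that endpoint
  have hvertid : ∀ (a b x : V), cross a b x = 0 → cross a b a = 0 → XC t a < XC t b →
      XC t x = XC t a → x = a := by
    intro a b x hx ha hab hXeq
    have hv := cross_vert t a b x a hXeq
    rw [hx, ha] at hv
    have hx2 : x.2 = a.2 := by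
      have hne : XC t b - XC t a ≠ 0 := by linarith
      have : (x.2 - a.2) * (XC t b - XC t a) = 0 := by linarith
      have := (mul_eq_zero.1 this).resolve_right hne
      linarith
    have hx1 : x.1 = a.1 := by
      simp only [XC] at hXeq
      rw [hx2] at hXeq
      linarith
    exact Prod.ext hx1 hx2
  set SS : (V × V) → Set V := fun pr =>
    {x | 0 < f pr x ∨ (cross pr.1 pr.2 x = 0 ∧ XC t x < XC t pr.1)} with hSSdef
  set C1 : Set V := {x | ∀ pr ∈ prs, f pr x ≤ 0 ∧
    (cross pr.1 pr.2 x = 0 → XC t pr.1 < XC t x ∧ XC t x < XC t pr.2)} with hC1def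
  set C2 : Set V := {x | ∀ pr ∈ prs, f pr x ≤ 0 ∧
    (cross pr.1 pr.2 x = 0 → XC t pr.2 < XC t x)} with hC2def
  set KK : ℕ → Set V := fun m =>
    if h : m < prs.length then SS (prs.get ⟨m, h⟩)
    else if m = prs.length then C1
    else if m = prs.length + 1 then C2
    else ∅ with hKKdef
  set K : Fin N → Set V := fun i => KK (i : ℕ) with hKdef
  have hfcombo : ∀ (pr : V × V) (x y : V) (a b : ℝ), a + b = 1 →
      f pr (a • x + b • y) = a * f pr x + b * f pr y := by
    intro pr x y a b hab
    rw [hfdef]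
    simp only []
    rw [cross_combo _ _ _ _ a b hab]
    ring
  -- convexity of SS
  have hSSconv : ∀ pr ∈ prs, Convex ℝ (SS pr) := by
    intro pr hpr x hx y hy a b ha hb hab
    rcases eq_or_lt_of_le ha with ha0 | ha0
    · have hzy : a • x + b • y = y := by
        rw [← ha0, zero_smul, zero_add, show b = 1 by linarith, one_smul]
      rw [hzy]; exact hy
    rcases eq_or_lt_of_le hb with hb0 | hb0
    · have hzx : a • x + b • y = x := by
        rw [← hb0, zero_smul, add_zero, show a = 1 by linarith, one_smul]
      rw [hzx]; exact hx
    have hfz := hfcombo pr x y a b hab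
    have hcz := cross_combo pr.1 pr.2 x y a b hab
    have hXz := XC_combo t x y a b hab
    simp only [hSSdef, Set.mem_setOf_eq] at hx hy ⊢
    rcases hx with hx1 | ⟨hx2, hx3⟩ <;> rcases hy with hy1 | ⟨hy2, hy3⟩
    · left
      rw [hfz]
      have h1 := mul_pos ha0 hx1
      have h2 := mul_pos hb0 hy1
      linarith
    · left
      have hfy0 : f pr y = 0 := by rw [hfdef]; simp only []; rw [hy2, mul_zero]
      rw [hfz, hfy0]
      have h1 := mul_pos ha0 hx1
      nlinarith
    · left
      have hfx0 : f pr x = 0 := by rw [hfdef]; simp only []; rw [hx2, mul_zero]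
      rw [hfz, hfx0]
      have h2 := mul_pos hb0 hy1
      nlinarith
    · right
      constructor
      · rw [hcz, hx2, hy2]; ring
      · rw [hXz]
        have h1 := mul_lt_mul_of_pos_left hx3 ha0
        have h2 := mul_lt_mul_of_pos_left hy3 hb0
        have e1 : a * XC t pr.1 + b * XC t pr.1 = XC t pr.1 := by
          linear_combination XC t pr.1 * hab
        linarith
  -- convexity of C1
  have hC1conv : Convex ℝ C1 := by
    intro x hx y hy a b ha hb hab
    rcases eq_or_lt_of_le ha with ha0 | ha0
    · have hzy : a • x + b • y = y := by
        rw [← ha0, zero_smul, zero_add, show b = 1 by linarith, one_smul]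
      rw [hzy]; exact hy
    rcases eq_or_lt_of_le hb with hb0 | hb0
    · have hzx : a • x + b • y = x := by
        rw [← hb0, zero_smul, add_zero, show a = 1 by linarith, one_smul]
      rw [hzx]; exact hx
    simp only [hC1def, Set.mem_setOf_eq] at hx hy ⊢
    intro pr hpr
    have hx' := hx pr hpr
    have hy' := hy pr hpr
    have hfz := hfcombo pr x y a b hab
    have hXz := XC_combo t x y a b hab
    constructor
    · rw [hfz]
      have h1 := mul_nonpos_of_nonneg_of_nonpos (le_of_lt ha0) hx'.1
      have h2 := mul_nonpos_of_nonneg_of_nonpos (le_of_lt hb0) hy'.1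
      linarith
    · intro hcr
      have hfz0 : f pr (a • x + b • y) = 0 := by
        rw [hfdef]; simp only []; rw [hcr, mul_zero]
      rw [hfz] at hfz0
      have h1 := mul_nonpos_of_nonneg_of_nonpos (le_of_lt ha0) hx'.1
      have h2 := mul_nonpos_of_nonneg_of_nonpos (le_of_lt hb0) hy'.1
      have hfx0 : f pr x = 0 := by nlinarith
      have hfy0 : f pr y = 0 := by nlinarith
      have hsgne := (hsg pr hpr).1
      have hcx : cross pr.1 pr.2 x = 0 := by
        have := hfx0
        rw [hfdef] at this
        simp only [] at this
        exact (mul_eq_zero.1 this).resolve_left hsgne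
      have hcy : cross pr.1 pr.2 y = 0 := by
        have := hfy0
        rw [hfdef] at this
        simp only [] at this
        exact (mul_eq_zero.1 this).resolve_left hsgne
      obtain ⟨hbx1, hbx2⟩ := hx'.2 hcx
      obtain ⟨hby1, hby2⟩ := hy'.2 hcy
      rw [hXz]
      have e1 : a * XC t pr.1 + b * XC t pr.1 = XC t pr.1 := by
        linear_combination XC t pr.1 * hab
      have e2 : a * XC t pr.2 + b * XC t pr.2 = XC t pr.2 := by
        linear_combination XC t pr.2 * hab
      have p1 := mul_lt_mul_of_pos_left hbx1 ha0
      have p2 := mul_lt_mul_of_pos_left hby1 hb0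
      have p3 := mul_lt_mul_of_pos_left hbx2 ha0
      have p4 := mul_lt_mul_of_pos_left hby2 hb0
      constructor <;> linarith
  -- convexity of C2
  have hC2conv : Convex ℝ C2 := by
    intro x hx y hy a b ha hb hab
    rcases eq_or_lt_of_le ha with ha0 | ha0
    · have hzy : a • x + b • y = y := by
        rw [← ha0, zero_smul, zero_add, show b = 1 by linarith, one_smul]
      rw [hzy]; exact hy
    rcases eq_or_lt_of_le hb with hb0 | hb0
    · have hzx : a • x + b • y = x := by
        rw [← hb0, zero_smul, add_zero, show a = 1 by linarith, one_smul]
      rw [hzx]; exact hx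
    simp only [hC2def, Set.mem_setOf_eq] at hx hy ⊢
    intro pr hpr
    have hx' := hx pr hpr
    have hy' := hy pr hpr
    have hfz := hfcombo pr x y a b hab
    have hXz := XC_combo t x y a b hab
    constructor
    · rw [hfz]
      have h1 := mul_nonpos_of_nonneg_of_nonpos (le_of_lt ha0) hx'.1
      have h2 := mul_nonpos_of_nonneg_of_nonpos (le_of_lt hb0) hy'.1
      linarith
    · intro hcr
      have hfz0 : f pr (a • x + b • y) = 0 := by
        rw [hfdef]; simp only []; rw [hcr, mul_zero]
      rw [hfz] at hfz0
      have h1 := mul_nonpos_of_nonneg_of_nonpos (le_of_lt ha0) hx'.1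
      have h2 := mul_nonpos_of_nonneg_of_nonpos (le_of_lt hb0) hy'.1
      have hfx0 : f pr x = 0 := by nlinarith
      have hfy0 : f pr y = 0 := by nlinarith
      have hsgne := (hsg pr hpr).1
      have hcx : cross pr.1 pr.2 x = 0 := by
        have := hfx0
        rw [hfdef] at this
        simp only [] at this
        exact (mul_eq_zero.1 this).resolve_left hsgne
      have hcy : cross pr.1 pr.2 y = 0 := by
        have := hfy0
        rw [hfdef] at this
        simp only [] at this
        exact (mul_eq_zero.1 this).resolve_left hsgne
      have hbx := hx'.2 hcx
      have hby := hy'.2 hcy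
      rw [hXz]
      have e2 : a * XC t pr.2 + b * XC t pr.2 = XC t pr.2 := by
        linear_combination XC t pr.2 * hab
      have p1 := mul_lt_mul_of_pos_left hbx ha0
      have p2 := mul_lt_mul_of_pos_left hby hb0
      linarith
  refine ⟨K, ?_, ?_⟩
  · intro i
    rw [hKdef]
    simp only []
    rw [hKKdef]
    simp only []
    by_cases h1 : (i : ℕ) < prs.length
    · rw [dif_pos h1]
      exact hSSconv _ (List.get_mem prs ⟨_, h1⟩)
    · rw [dif_neg h1]
      by_cases h2 : (i : ℕ) = prs.length
      · rw [if_pos h2]; exact hC1conv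
      · rw [if_neg h2]
        by_cases h3 : (i : ℕ) = prs.length + 1
        · rw [if_pos h3]; exact hC2conv
        · rw [if_neg h3]; exact convex_empty
  · ext x
    simp only [Set.mem_iUnion, Set.mem_compl_iff, Finset.mem_coe]
    constructor
    · rintro ⟨i, hKi⟩ hxP
      rw [hKdef] at hKi
      simp only [] at hKi
      rw [hKKdef] at hKi
      simp only [] at hKi
      by_cases h1 : (i : ℕ) < prs.length
      · rw [dif_pos h1] at hKi
        set pr := prs.get ⟨(i : ℕ), h1⟩ with hprdef
        have hpr : pr ∈ prs := by rw [hprdef]; exact List.get_mem prs ⟨_, h1⟩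
        have ho := hedge pr hpr
        simp only [hSSdef, Set.mem_setOf_eq] at hKi
        by_cases hx1 : x = pr.1
        · rcases hKi with hKi | hKi
          · rw [hfdef] at hKi
            simp only [] at hKi
            rw [hx1, cross_self_left, mul_zero] at hKi
            exact lt_irrefl _ hKi
          · rw [hx1] at hKi
            exact lt_irrefl _ hKi.2
        · by_cases hx2 : x = pr.2
          · rcases hKi with hKi | hKi
            · rw [hfdef] at hKi
              simp only [] at hKi
              rw [hx2, cross_self_right, mul_zero] at hKi
              exact lt_irrefl _ hKi
            · rw [hx2] at hKi
              have := ho.2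
              linarith [hKi.2]
          · have hneg := (hsg pr hpr).2 x hxP hx1 hx2
            rcases hKi with hKi | hKi
            · rw [hfdef] at hKi
              simp only [] at hKi
              linarith
            · rw [hKi.1, mul_zero] at hneg
              exact lt_irrefl _ hneg
      · rw [dif_neg h1] at hKi
        obtain ⟨pr, hpr, hor⟩ := hcover x hxP
        have ho := hedge pr hpr
        by_cases h2 : (i : ℕ) = prs.length
        · rw [if_pos h2] at hKi
          simp only [hC1def, Set.mem_setOf_eq] at hKi
          have hKi' := hKi pr hpr
          rcases hor with rfl | rfl
          · have := (hKi'.2 (cross_self_left _ _)).1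
            exact lt_irrefl _ this
          · have := (hKi'.2 (cross_self_right _ _)).2
            exact lt_irrefl _ this
        · rw [if_neg h2] at hKi
          by_cases h3 : (i : ℕ) = prs.length + 1
          · rw [if_pos h3] at hKi
            simp only [hC2def, Set.mem_setOf_eq] at hKi
            have hKi' := hKi pr hpr
            rcases hor with rfl | rfl
            · have := hKi'.2 (cross_self_left _ _)
              linarith [ho.2]
            · have := hKi'.2 (cross_self_right _ _)
              exact lt_irrefl _ this
          · rw [if_neg h3] at hKi
            exact hKi
    · intro hxP
      by_cases hfpos : ∃ pr ∈ prs, 0 < f pr x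
      · obtain ⟨pr, hpr, hf⟩ := hfpos
        obtain ⟨idx, hidx⟩ := List.mem_iff_get.1 hpr
        refine ⟨⟨(idx : ℕ), by omega⟩, ?_⟩
        rw [hKdef]
        simp only []
        show x ∈ KK (idx : ℕ)
        rw [hKKdef]
        simp only []
        rw [dif_pos idx.2]
        have hget : prs.get ⟨(idx : ℕ), idx.2⟩ = pr := by
          rw [← hidx]
        rw [hget]
        simp only [hSSdef, Set.mem_setOf_eq]
        exact Or.inl hf
      · push_neg at hfpos
        by_cases hbef : ∃ pr ∈ prs, cross pr.1 pr.2 x = 0 ∧ XC t x < XC t pr.1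
        · obtain ⟨pr, hpr, hcr, hXlt⟩ := hbef
          obtain ⟨idx, hidx⟩ := List.mem_iff_get.1 hpr
          refine ⟨⟨(idx : ℕ), by omega⟩, ?_⟩
          rw [hKdef]
          simp only []
          show x ∈ KK (idx : ℕ)
          rw [hKKdef]
          simp only []
          rw [dif_pos idx.2]
          have hget : prs.get ⟨(idx : ℕ), idx.2⟩ = pr := by
            rw [← hidx]
          rw [hget]
          simp only [hSSdef, Set.mem_setOf_eq]
          exact Or.inr ⟨hcr, hXlt⟩
        · push_neg at hbef
          by_cases hmid : ∃ pr ∈ prs, cross pr.1 pr.2 x = 0 ∧ ¬(XC t pr.2 < XC t x)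
          · obtain ⟨pr0, hpr0, hc0, hnl⟩ := hmid
            push_neg at hnl
            have ho := hedge pr0 hpr0
            have hx1 : x ≠ pr0.1 := fun h => hxP (h ▸ ho.1.1)
            have hx2 : x ≠ pr0.2 := fun h => hxP (h ▸ ho.1.2.1)
            have hne1 : XC t x ≠ XC t pr0.1 := by
              intro h
              exact hx1 (hvertid pr0.1 pr0.2 x hc0 (cross_self_left _ _) ho.2 h)
            have hne2 : XC t x ≠ XC t pr0.2 := by
              intro h
              have hv := cross_vert t pr0.1 pr0.2 x pr0.2 h
              rw [hc0, cross_self_right] at hv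
              have hxx2 : x.2 = pr0.2.2 := by
                have hdne : XC t pr0.2 - XC t pr0.1 ≠ 0 := by
                  have := ho.2; intro hh; linarith
                have hz : (x.2 - pr0.2.2) * (XC t pr0.2 - XC t pr0.1) = 0 := by linarith
                have := (mul_eq_zero.1 hz).resolve_right hdne
                linarith
              apply hx2
              have hxx1 : x.1 = pr0.2.1 := by
                simp only [XC] at h
                rw [hxx2] at h
                linarith
              exact Prod.ext hxx1 hxx2
            have hlt1 : XC t pr0.1 < XC t x :=
              lt_of_le_of_ne (not_lt.1 (fun h => (hbef pr0 hpr0 hc0).not_gt h)) (Ne.symm hne1)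
            have hlt2 : XC t x < XC t pr0.2 := lt_of_le_of_ne hnl hne2
            have hseg : x ∈ openSegment ℝ pr0.1 pr0.2 :=
              mem_openSegment_of_cross t _ _ _ hc0 hlt1 hlt2
            refine ⟨⟨prs.length, by omega⟩, ?_⟩
            rw [hKdef]
            simp only []
            show x ∈ KK prs.length
            rw [hKKdef]
            simp only []
            rw [dif_neg (by omega), if_pos trivial]
            simp only [hC1def, Set.mem_setOf_eq]
            intro pr hpr
            refine ⟨hfpos pr hpr, fun hcr => ?_⟩
            obtain ⟨aa, bb, haa, hbb, habb, heq⟩ := hseg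
            have ho' := hedge pr hpr
            have hfx0 : f pr x = 0 := by
              rw [hfdef]; simp only []; rw [hcr, mul_zero]
            have hcomb : aa * f pr pr0.1 + bb * f pr pr0.2 = 0 := by
              rw [← hfcombo pr pr0.1 pr0.2 aa bb habb, heq, hfx0]
            have hfa := hfP pr hpr pr0.1 ho.1.1
            have hfb := hfP pr hpr pr0.2 ho.1.2.1
            have hz1 : f pr pr0.1 = 0 := by nlinarith
            have hz2 : f pr pr0.2 = 0 := by nlinarith
            have hin1 : pr0.1 = pr.1 ∨ pr0.1 = pr.2 := by
              by_contra hcon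
              push_neg at hcon
              have hstr := (hsg pr hpr).2 pr0.1 ho.1.1 hcon.1 hcon.2
              rw [hfdef] at hz1
              simp only [] at hz1
              rw [hz1] at hstr
              exact lt_irrefl _ hstr
            have hin2 : pr0.2 = pr.1 ∨ pr0.2 = pr.2 := by
              by_contra hcon
              push_neg at hcon
              have hstr := (hsg pr hpr).2 pr0.2 ho.1.2.1 hcon.1 hcon.2
              rw [hfdef] at hz2
              simp only [] at hz2
              rw [hz2] at hstr
              exact lt_irrefl _ hstr
            have hXpr0 : XC t pr0.1 < XC t pr0.2 := ho.2
            rcases hin1 with h1 | h1 <;> rcases hin2 with h2 | h2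
            · rw [h1, h2] at hXpr0; exact absurd hXpr0 (lt_irrefl _)
            · rw [← h1, ← h2]; exact ⟨hlt1, hlt2⟩
            · rw [h1, h2] at hXpr0
              have := ho'.2
              exact absurd hXpr0 (by intro hh; linarith)
            · rw [h1, h2] at hXpr0; exact absurd hXpr0 (lt_irrefl _)
          · push_neg at hmid
            refine ⟨⟨prs.length + 1, by omega⟩, ?_⟩
            rw [hKdef]
            simp only []
            show x ∈ KK (prs.length + 1)
            rw [hKKdef]
            simp only []
            rw [dif_neg (by omega), if_neg (by omega), if_pos trivial]
            simp only [hC2def, Set.mem_setOf_eq]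
            intro pr hpr
            exact ⟨hfpos pr hpr, hmid pr hpr⟩


end
end Stmt5

/-- The complement of any `n ≥ 4` points in convex position in the plane can be
covered by `⌊(n+5)/2⌋` convex sets. -/
theorem stmt_5 (n : ℕ) (hn : 4 ≤ n) (P : Finset (ℝ × ℝ)) (hcard : P.card = n)
    (hconvpos : (P : Set (ℝ × ℝ)) ⊆ (convexHull ℝ (P : Set (ℝ × ℝ))).extremePoints ℝ) :
    ∃ K : Fin ((n + 5) / 2) → Set (ℝ × ℝ),
      (∀ i, Convex ℝ (K i)) ∧ (⋃ i, K i) = (P : Set (ℝ × ℝ))ᶜ := by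
  obtain ⟨t, hinj⟩ := Stmt5.exists_inj P
  have hcp := Stmt5.convPos_of_extreme P hconvpos
  obtain ⟨prs, hedge, hcover, hlen⟩ := Stmt5.exists_pairs t P hcp hinj (by omega)
  exact Stmt5.cover_of_pairs t P hinj prs hedge hcover ((n + 5) / 2)
    (by rw [hcard] at hlen; omega)
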